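/- arXiv:2406.18396 — 6 statements merged into one kernel-verified Lean document; each statement's English description precedes it below -/
import Mathlib

section
/- Let α, β be complex numbers. Then |1 + α(λ - 1)| + |β(λ - 1)| ≤ 1 for all complex λ with |λ| ≤ 1 if and only if α is a real number in [0,1] and β = 0. -/
open Complex

theorem stmt1 (α β : ℂ) :
    (∀ lam : ℂ, ‖lam‖ ≤ 1 →
        ‖1 + α * (lam - 1)‖ + ‖β * (lam - 1)‖ ≤ 1) ↔
      ((∃ t : ℝ, t ∈ Set.Icc (0 : ℝ) 1 ∧ α = (t : ℂ)) ∧ β = 0) := by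
  constructor
  · intro h
    set a := ‖α‖ with ha
    set b := ‖1 - α‖ with hb
    -- Step 1: a + b ≤ 1
    have key : a + b ≤ 1 := by
      rcases eq_or_ne α 0 with rfl | h0
      · simp [ha, hb]
      rcases eq_or_ne α 1 with rfl | h1
      · simp [ha, hb]
      have ha0 : 0 < a := norm_pos_iff.mpr h0
      have hb0 : 0 < b := norm_pos_iff.mpr (sub_ne_zero.mpr (Ne.symm h1))
      set lam : ℂ := (starRingEnd ℂ) α * (1 - α) * (((a*b)⁻¹ : ℝ) : ℂ) with hl
      have habs : ‖lam‖ = 1 := by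
        rw [hl]
        rw [norm_mul, norm_mul, Complex.norm_conj, Complex.norm_real, Real.norm_eq_abs,
          _root_.abs_of_nonneg (by positivity : (0:ℝ) ≤ (a*b)⁻¹)]
        rw [← ha, ← hb]
        field_simp
      have hconj : α * (starRingEnd ℂ) α = ((a : ℝ) : ℂ)^2 := by
        rw [Complex.mul_conj]
        norm_cast
        exact (Complex.sq_norm α).symm
      have hval : 1 + α * (lam - 1) = (1 - α) * (((a + b)/b : ℝ) : ℂ) := by
        have hbne : ((b:ℂ)) ≠ 0 := by exact_mod_cast hb0.ne'
        have hane : ((a:ℂ)) ≠ 0 := by exact_mod_cast ha0.ne'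
        rw [hl]
        push_cast
        field_simp
        ring_nf
        linear_combination (1 - α) * hconj
      have habs2 : ‖1 + α * (lam - 1)‖ = a + b := by
        rw [hval, norm_mul, Complex.norm_real, Real.norm_eq_abs, _root_.abs_of_nonneg (by positivity), ← hb]
        field_simp
      have := h lam habs.le
      rw [habs2] at this
      have h2 : 0 ≤ ‖β * (lam - 1)‖ := norm_nonneg _
      linarith
    -- Step 2: α is real, 0 ≤ re ≤ 1
    have tri : (1:ℝ) ≤ a + b := by
      have := norm_add_le α (1 - α)
      simpa using this
    have hre1 : |α.re| ≤ a := Complex.abs_re_le_norm α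
    have hre2 : |1 - α.re| ≤ b := by simpa using Complex.abs_re_le_norm (1 - α)
    have htri : (1:ℝ) ≤ |α.re| + |1 - α.re| := by
      have := abs_add_le α.re (1 - α.re)
      simpa using this
    have e1 : |α.re| = a := le_antisymm hre1 (by linarith)
    have him : α.im = 0 := by
      have h2 : a^2 = α.re^2 + α.im^2 := by
        rw [ha, Complex.sq_norm, Complex.normSq_apply]; ring
      have e2 : a^2 = α.re^2 := by rw [← e1, _root_.sq_abs]
      have h3 : α.im^2 = 0 := by linarith
      exact pow_eq_zero_iff (by norm_num) |>.mp h3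
    have hre0 : 0 ≤ α.re ∧ α.re ≤ 1 := by
      constructor <;> rcases abs_cases α.re with ⟨e, _⟩ | ⟨e, _⟩ <;>
        rcases abs_cases (1 - α.re) with ⟨e', _⟩ | ⟨e', _⟩ <;> linarith
    have hα : α = ((α.re : ℝ) : ℂ) := by
      apply Complex.ext <;> simp [him]
    -- Step 3: β = 0
    have hβ : ∀ ε : ℝ, 0 < ε → ε ≤ 1 → ‖β‖ ≤ ε := by
      intro ε hε hε1
      set lam : ℂ := ⟨1 - ε^2, ε⟩ with hl
      have habs : ‖lam‖ ≤ 1 := by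
        rw [Complex.norm_def, Complex.normSq_apply]
        have hx : lam.re * lam.re + lam.im * lam.im ≤ 1 := by
          simp only [hl]
          have hε2 : ε^2 ≤ 1 := by nlinarith
          nlinarith [sq_nonneg ε, hε2]
        calc √(lam.re * lam.re + lam.im * lam.im) ≤ √1 := Real.sqrt_le_sqrt hx
          _ = 1 := Real.sqrt_one
      have h1 := h lam habs
      have hre : (1 + α * (lam - 1)).re = 1 - α.re * ε^2 := by
        rw [hα]
        simp [hl]
        ring
      have hge : 1 - α.re * ε^2 ≤ ‖1 + α * (lam - 1)‖ := by
        rw [← hre]; exact Complex.re_le_norm _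
      have him1 : ‖β‖ * ε ≤ ‖β * (lam - 1)‖ := by
        rw [norm_mul]
        apply mul_le_mul_of_nonneg_left _ (norm_nonneg β)
        have := Complex.abs_im_le_norm (lam - 1)
        simp [hl] at this
        rwa [_root_.abs_of_nonneg hε.le] at this
      have : ‖β‖ * ε ≤ α.re * ε^2 := by linarith
      have h3 : α.re * ε^2 ≤ ε^2 := by nlinarith [hre0.2, hre0.1]
      nlinarith
    have hβ0 : β = 0 := by
      by_contra hne
      have hpos : 0 < ‖β‖ := norm_pos_iff.mpr hne
      have := hβ (min (‖β‖ / 2) 1) (by positivity) (min_le_right _ _)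
      have h2 : min (‖β‖ / 2) 1 ≤ ‖β‖ / 2 := min_le_left _ _
      linarith
    exact ⟨⟨α.re, ⟨hre0.1, hre0.2⟩, hα⟩, hβ0⟩
  · rintro ⟨⟨t, ⟨ht0, ht1⟩, rfl⟩, rfl⟩ lam hlam
    simp only [zero_mul, norm_zero, add_zero]
    have heq : (1 : ℂ) + (t:ℂ) * (lam - 1) = ((1 - t : ℝ) : ℂ) + (t:ℂ) * lam := by
      push_cast; ring
    rw [heq]
    calc ‖_‖ ≤ ‖((1 - t : ℝ) : ℂ)‖ + ‖(t:ℂ) * lam‖ :=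
          norm_add_le _ _
      _ ≤ (1 - t) + t * 1 := by
          rw [norm_mul, Complex.norm_real, Complex.norm_real, Real.norm_eq_abs, Real.norm_eq_abs,
            _root_.abs_of_nonneg (by linarith), _root_.abs_of_nonneg ht0]
          nlinarith [norm_nonneg lam]
      _ = 1 := by ring
end

section
/- Let L_{2n} = {z ∈ ℂ^{2n} : ‖z‖ < 1 and 2‖z‖² - |z•z|² < 1} where z•z = z₁² + ⋯ + z_{2n}². The linear map R(z₁,…,z_{2n}) = ((z₁ - i z₂)/2, (z₂ + i z₁)/2, …, (z_{2n-1} - i z_{2n})/2, (z_{2n} + i z_{2n-1})/2) maps L_{2n} into L_{2n} and satisfies R ∘ R = R. -/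
noncomputable def lieBall (m : ℕ) : Set (EuclideanSpace ℂ (Fin m)) :=
  {z | ‖z‖ < 1 ∧ 2 * ‖z‖ ^ 2 - ‖∑ j, z j ^ 2‖ ^ 2 < 1}

noncomputable def lieRetr (n : ℕ) :
    EuclideanSpace ℂ (Fin (2 * n)) → EuclideanSpace ℂ (Fin (2 * n)) :=
  fun z => WithLp.toLp 2 fun j =>
    if h : j.val % 2 = 0 then
      (z j - Complex.I * z ⟨j.val + 1, by have := j.isLt; omega⟩) / 2
    else
      (z j + Complex.I * z ⟨j.val - 1, by have := j.isLt; omega⟩) / 2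

lemma sum_range_two_mul' {M : Type*} [AddCommMonoid M] (n : ℕ) (f : ℕ → M) :
    ∑ i ∈ Finset.range (2*n), f i = ∑ i ∈ Finset.range n, (f (2*i) + f (2*i+1)) := by
  induction n with
  | zero => simp
  | succ n ih =>
      have h : 2*(n+1) = 2*n+1+1 := by ring
      rw [h, Finset.sum_range_succ, Finset.sum_range_succ, ih, Finset.sum_range_succ, add_assoc]

lemma fin_sum_two_mul {M : Type*} [AddCommMonoid M] (n : ℕ) (g : Fin (2*n) → M) :
    ∑ j, g j = ∑ k : Fin n,
      (g ⟨2*(k:ℕ), by have := k.isLt; omega⟩ + g ⟨2*(k:ℕ)+1, by have := k.isLt; omega⟩) := by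
  classical
  set F : ℕ → M := fun i => if h : i < 2*n then g ⟨i, h⟩ else 0 with hF
  have h1 : ∑ j, g j = ∑ j : Fin (2*n), F j.val := by
    refine Finset.sum_congr rfl fun j _ => ?_
    simp [hF, j.isLt]
  rw [h1, Fin.sum_univ_eq_sum_range F (2*n), sum_range_two_mul',
    ← Fin.sum_univ_eq_sum_range (fun i => F (2*i) + F (2*i+1)) n]
  refine Finset.sum_congr rfl fun k _ => ?_
  have hk := k.isLt
  simp only [hF]
  rw [dif_pos (by omega), dif_pos (by omega)]

lemma euc_norm_sq {m : ℕ} (x : EuclideanSpace ℂ (Fin m)) :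
    ‖x‖^2 = ∑ j, ‖x j‖^2 := by
  rw [EuclideanSpace.norm_eq, Real.sq_sqrt (by positivity)]

lemma pair_norm (a b : ℂ) :
    (‖a‖^2 + ‖b‖^2) * 2 = ‖a - Complex.I*b‖^2 + ‖a + Complex.I*b‖^2 := by
  simp only [Complex.sq_norm, Complex.normSq_apply, Complex.sub_re,
    Complex.sub_im, Complex.add_re, Complex.add_im, Complex.mul_re, Complex.mul_im,
    Complex.I_re, Complex.I_im]
  ring

lemma pair_prod (a b : ℂ) : a^2 + b^2 = (a - Complex.I*b) * (a + Complex.I*b) := by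
  linear_combination (b^2) * Complex.I_sq

lemma half_norm (c : ℂ) : ‖c/2‖^2 + ‖Complex.I*c/2‖^2 = ‖c‖^2/2 := by
  simp only [norm_div, norm_mul, Complex.norm_I, one_mul, Complex.norm_ofNat]
  ring

lemma half_sq (c : ℂ) : (c/2)^2 + (Complex.I*c/2)^2 = 0 := by
  linear_combination (c^2/4) * Complex.I_sq

noncomputable def uvec (n : ℕ) (z : EuclideanSpace ℂ (Fin (2*n))) :
    EuclideanSpace ℂ (Fin n) :=
  WithLp.toLp 2 fun k => z ⟨2*(k:ℕ), by have := k.isLt; omega⟩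
    - Complex.I * z ⟨2*(k:ℕ)+1, by have := k.isLt; omega⟩

noncomputable def vvec (n : ℕ) (z : EuclideanSpace ℂ (Fin (2*n))) :
    EuclideanSpace ℂ (Fin n) :=
  WithLp.toLp 2 fun k => z ⟨2*(k:ℕ), by have := k.isLt; omega⟩
    + Complex.I * z ⟨2*(k:ℕ)+1, by have := k.isLt; omega⟩

theorem stmt5 (n : ℕ) :
    Set.MapsTo (lieRetr n) (lieBall (2 * n)) (lieBall (2 * n)) ∧
      lieRetr n ∘ lieRetr n = lieRetr n := by
  constructor
  · intro z hz
    obtain ⟨hz1, hz2⟩ := hz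
    -- evaluation of lieRetr at even/odd indices
    have hwe : ∀ (k : Fin n) (h : 2*(k:ℕ) < 2*n),
        lieRetr n z ⟨2*(k:ℕ), h⟩ = uvec n z k / 2 := by
      intro k h
      have hc : (2*(k:ℕ)) % 2 = 0 := by omega
      simp [lieRetr, hc, uvec]
    have hwo : ∀ (k : Fin n) (h : 2*(k:ℕ)+1 < 2*n),
        lieRetr n z ⟨2*(k:ℕ)+1, h⟩ = Complex.I * uvec n z k / 2 := by
      intro k h
      have hc : (2*(k:ℕ)+1) % 2 = 1 := by omega
      simp [lieRetr, hc]
      simp only [uvec]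
      linear_combination (z ⟨2*(k:ℕ)+1, h⟩) * Complex.I_sq
    set u : EuclideanSpace ℂ (Fin n) := uvec n z with hu
    set v : EuclideanSpace ℂ (Fin n) := vvec n z with hv
    -- ‖u‖² + ‖v‖² = 2 ‖z‖²
    have key1 : ‖u‖^2 + ‖v‖^2 = 2 * ‖z‖^2 := by
      rw [euc_norm_sq u, euc_norm_sq v, euc_norm_sq z, ← Finset.sum_add_distrib,
        fin_sum_two_mul n (fun j => ‖z j‖^2), Finset.mul_sum]
      refine Finset.sum_congr rfl fun k _ => ?_
      have := pair_norm (z ⟨2*(k:ℕ), by have := k.isLt; omega⟩)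
        (z ⟨2*(k:ℕ)+1, by have := k.isLt; omega⟩)
      simp only [hu, hv, uvec, vvec, PiLp.toLp_apply]
      linarith [this]
    -- z • z = ∑ u v
    have hSeq : (∑ j, z j ^ 2) = ∑ k, u k * v k := by
      rw [fin_sum_two_mul n (fun j => z j ^ 2)]
      refine Finset.sum_congr rfl fun k _ => ?_
      simp only [hu, hv, uvec, vvec, PiLp.toLp_apply]
      exact pair_prod _ _
    -- Cauchy-Schwarz
    have hCS : ‖∑ j, z j ^ 2‖ ≤ ‖u‖ * ‖v‖ := by
      set x : EuclideanSpace ℂ (Fin n) := WithLp.toLp 2 fun k => (starRingEnd ℂ) (u k) with hx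
      have h1 : (inner ℂ x v : ℂ) = ∑ k, u k * v k := by
        simp [PiLp.inner_apply, hx, RCLike.inner_apply]
        exact Finset.sum_congr rfl fun _ _ => mul_comm _ _
      have hsq : ‖x‖^2 = ‖u‖^2 := by
        rw [euc_norm_sq, euc_norm_sq]
        exact Finset.sum_congr rfl fun k _ => by simp [hx]
      have h2 : ‖x‖ = ‖u‖ := by
        rw [← Real.sqrt_sq (norm_nonneg x), hsq, Real.sqrt_sq (norm_nonneg u)]
      calc ‖∑ j, z j ^ 2‖ = ‖(inner ℂ x v : ℂ)‖ := by
            rw [h1, ← hSeq]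
        _ ≤ ‖x‖ * ‖v‖ := norm_inner_le_norm x v
        _ = ‖u‖ * ‖v‖ := by rw [h2]
    have key2 : ‖∑ j, z j ^ 2‖ ^ 2 ≤ ‖u‖^2 * ‖v‖^2 := by
      rw [← mul_pow]
      exact pow_le_pow_left₀ (norm_nonneg _) hCS 2
    -- ‖u‖² < 1
    have hP : ‖u‖^2 < 1 := by
      have hz1' : ‖z‖^2 < 1 := by nlinarith [norm_nonneg z]
      have hPQ2 : ‖u‖^2 + ‖v‖^2 < 2 := by linarith
      by_contra hP1
      push_neg at hP1
      have hQ : ‖v‖^2 < 1 := by linarith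
      nlinarith [mul_nonneg (by linarith : (0:ℝ) ≤ ‖u‖^2 - 1)
        (by linarith : (0:ℝ) ≤ 1 - ‖v‖^2)]
    -- norm of image
    have key3 : ‖lieRetr n z‖^2 = ‖u‖^2 / 2 := by
      rw [euc_norm_sq (lieRetr n z), fin_sum_two_mul n (fun j => ‖lieRetr n z j‖^2),
        euc_norm_sq u, Finset.sum_div]
      refine Finset.sum_congr rfl fun k _ => ?_
      simp only []
      rw [hwe k (by have := k.isLt; omega), hwo k (by have := k.isLt; omega), half_norm]
    have key4 : (∑ j, lieRetr n z j ^ 2) = 0 := by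
      rw [fin_sum_two_mul n (fun j => lieRetr n z j ^ 2)]
      refine Finset.sum_eq_zero fun k _ => ?_
      simp only []
      rw [hwe k (by have := k.isLt; omega), hwo k (by have := k.isLt; omega)]
      exact half_sq _
    constructor
    · nlinarith [norm_nonneg (lieRetr n z), key3, hP]
    · rw [key4]
      simp only [norm_zero]
      nlinarith [key3, hP]
  · funext z
    ext j
    have zc : ∀ (a b : ℕ) (ha : a < 2*n) (hb : b < 2*n), a = b →
        z ⟨a, ha⟩ = z ⟨b, hb⟩ := by rintro a b ha hb rfl; rfl
    by_cases hj : j.val % 2 = 0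
    · have h1 : (j.val + 1) % 2 = 1 := by omega
      simp [Function.comp_apply, lieRetr, hj, h1]
      linear_combination (-(z j)/2) * Complex.I_sq
    · have h0 : j.val % 2 = 1 := by omega
      have h2 : j.val - 1 + 1 = j.val := by omega
      have h3 : (j.val - 1) % 2 = 0 := by omega
      simp [Function.comp_apply, lieRetr, h0, h3]
      rw [zc _ _ _ j.isLt h2]
      linear_combination (-(z j)/2) * Complex.I_sq
end

section
/- The map φ(z₁,z₂) = (z₁ + i z₂, -z₁ + i z₂) is a bijection from the Lie ball L₂ = {z ∈ ℂ² : ‖z‖ < 1, 2‖z‖² - |z₁² + z₂²|² < 1} onto the open bidisc 𝔻² = {(w₁,w₂) ∈ ℂ² : |w₁| < 1 and |w₂| < 1}. -/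
theorem stmt8 :
    Set.BijOn (fun z : ℂ × ℂ => (z.1 + Complex.I * z.2, -z.1 + Complex.I * z.2))
      {z : ℂ × ℂ | ‖z.1‖ ^ 2 + ‖z.2‖ ^ 2 < 1 ∧
        2 * (‖z.1‖ ^ 2 + ‖z.2‖ ^ 2) -
          ‖z.1 ^ 2 + z.2 ^ 2‖ ^ 2 < 1}
      {w : ℂ × ℂ | ‖w.1‖ < 1 ∧ ‖w.2‖ < 1} := by
  have keysum : ∀ z : ℂ × ℂ,
      ‖z.1 + Complex.I * z.2‖ ^ 2 + ‖-z.1 + Complex.I * z.2‖ ^ 2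
        = 2 * (‖z.1‖ ^ 2 + ‖z.2‖ ^ 2) := by
    intro z
    simp only [Complex.sq_norm, Complex.normSq_apply, Complex.add_re, Complex.add_im,
      Complex.mul_re, Complex.mul_im, Complex.I_re, Complex.I_im, Complex.neg_re,
      Complex.neg_im]
    ring
  have keyprod : ∀ z : ℂ × ℂ,
      ‖z.1 + Complex.I * z.2‖ * ‖-z.1 + Complex.I * z.2‖
        = ‖z.1 ^ 2 + z.2 ^ 2‖ := by
    intro z
    rw [← norm_mul]
    have : (z.1 + Complex.I * z.2) * (-z.1 + Complex.I * z.2) = -(z.1 ^ 2 + z.2 ^ 2) := by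
      linear_combination (z.2 ^ 2 : ℂ) * Complex.I_sq
    rw [this, norm_neg]
  apply Set.InvOn.bijOn
    (f' := fun w : ℂ × ℂ => ((w.1 - w.2) / 2, -Complex.I * (w.1 + w.2) / 2))
  · constructor
    · rintro ⟨z1, z2⟩ _
      simp only [Prod.mk.injEq]
      constructor
      · ring
      · linear_combination (-z2 : ℂ) * Complex.I_sq
    · rintro ⟨w1, w2⟩ _
      simp only [Prod.mk.injEq]
      constructor
      · linear_combination (-(w1 + w2) / 2 : ℂ) * Complex.I_sq
      · linear_combination (-(w1 + w2) / 2 : ℂ) * Complex.I_sq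
  · rintro z ⟨h1, h2⟩
    have hs := keysum z
    have hp := keyprod z
    set a := ‖z.1 + Complex.I * z.2‖ with ha
    set b := ‖-z.1 + Complex.I * z.2‖ with hb
    have ha0 : 0 ≤ a := norm_nonneg _
    have hb0 : 0 ≤ b := norm_nonneg _
    have hsum : a ^ 2 + b ^ 2 < 2 := by linarith
    have hp2 : (a * b) ^ 2 = ‖z.1 ^ 2 + z.2 ^ 2‖ ^ 2 := by rw [hp]
    have hprod : 0 < (1 - a ^ 2) * (1 - b ^ 2) := by nlinarith
    have h1a : 0 < 1 - a ^ 2 := by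
      by_contra h
      push_neg at h
      have hb2 : 1 - b ^ 2 < 0 := by
        by_contra hb'
        push_neg at hb'
        nlinarith [mul_nonneg (neg_nonneg.2 h) hb']
      linarith
    have h1b : 0 < 1 - b ^ 2 := by
      by_contra h
      push_neg at h
      have ha2 : 1 - a ^ 2 < 0 := by
        by_contra ha'
        push_neg at ha'
        nlinarith [mul_nonneg ha' (neg_nonneg.2 h)]
      linarith
    exact ⟨by nlinarith, by nlinarith⟩
  · rintro w ⟨h1, h2⟩
    simp only [Set.mem_setOf_eq]
    set z : ℂ × ℂ := ((w.1 - w.2) / 2, -Complex.I * (w.1 + w.2) / 2) with hz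
    have himg1 : z.1 + Complex.I * z.2 = w.1 := by
      simp only [hz]
      linear_combination (-(w.1 + w.2) / 2 : ℂ) * Complex.I_sq
    have himg2 : -z.1 + Complex.I * z.2 = w.2 := by
      simp only [hz]
      linear_combination (-(w.1 + w.2) / 2 : ℂ) * Complex.I_sq
    have hs := keysum z
    have hp := keyprod z
    rw [himg1, himg2] at hs hp
    have ha0 : 0 ≤ ‖w.1‖ := norm_nonneg _
    have hb0 : 0 ≤ ‖w.2‖ := norm_nonneg _
    have ha2 : ‖w.1‖ ^ 2 < 1 := by nlinarith
    have hb2 : ‖w.2‖ ^ 2 < 1 := by nlinarith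
    have hp2 : ‖z.1 ^ 2 + z.2 ^ 2‖ ^ 2
        = (‖w.1‖ * ‖w.2‖) ^ 2 := by rw [← hp]
    constructor
    · linarith
    · nlinarith [mul_pos (by linarith : (0:ℝ) < 1 - ‖w.1‖ ^ 2)
        (by linarith : (0:ℝ) < 1 - ‖w.2‖ ^ 2)]
end

section
/- Let K = {z ∈ ℂ³ : max(|z₁| + |z₃|, |z₂| + |z₃|) ≤ 1} and let R : ℂ³ → ℂ³ be a linear map with R(K) ⊆ K, R(1,t,0) = (1,t,0) for some t ∈ [0,1], and write R(1,0,0) = (α₁,α₂,α₃), R(0,1,0) = (β₁,β₂,β₃). Then α₃ = 0 and β₃ = 0; i.e., R maps ℂ² × {0} into ℂ² × {0}. -/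
lemma stmt11_circle (δ : ℝ) (hδ0 : 0 < δ) (hδ2 : δ ≤ 2) :
    ∃ v v' : ℂ, ‖v‖ = 1 ∧ ‖v'‖ = 1 ∧
      ‖v - 1‖ = Real.sqrt (2 * δ) ∧
      ‖v' - 1‖ = Real.sqrt (2 * δ) ∧
      (v - 1) + (v' - 1) = -2 * (δ : ℂ) := by
  set s := Real.sqrt (δ * (2 - δ)) with hsdef
  have hs2 : s ^ 2 = δ * (2 - δ) := Real.sq_sqrt (by nlinarith)
  refine ⟨⟨1 - δ, s⟩, ⟨1 - δ, -s⟩, ?_, ?_, ?_, ?_, ?_⟩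
  · rw [Complex.norm_def, Complex.normSq_mk,
      show (1 - δ) * (1 - δ) + s * s = 1 by nlinarith]
    exact Real.sqrt_one
  · rw [Complex.norm_def, Complex.normSq_mk,
      show (1 - δ) * (1 - δ) + -s * -s = 1 by nlinarith]
    exact Real.sqrt_one
  · rw [show (⟨1 - δ, s⟩ - 1 : ℂ) = ⟨-δ, s⟩ by apply Complex.ext <;> simp]
    rw [Complex.norm_def, Complex.normSq_mk,
      show -δ * -δ + s * s = 2 * δ by nlinarith]
  · rw [show (⟨1 - δ, -s⟩ - 1 : ℂ) = ⟨-δ, -s⟩ by apply Complex.ext <;> simp]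
    rw [Complex.norm_def, Complex.normSq_mk,
      show -δ * -δ + -s * -s = 2 * δ by nlinarith]
  · apply Complex.ext <;> simp <;> ring

set_option maxHeartbeats 800000 in
lemma stmt11_aux (t : ℝ) (ht0 : 0 ≤ t) (ht1 : t ≤ 1) (a1 b1 a3 b3 : ℂ)
    (e1 : a1 + (t : ℂ) * b1 = 1) (e3 : a3 + (t : ℂ) * b3 = 0)
    (hb : ‖b1‖ ≤ 1)
    (H : ∀ z : ℂ, ‖z‖ ≤ 1 →
      ‖a1 + z * b1‖ + ‖a3 + z * b3‖ ≤ 1) :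
    a3 = 0 ∧ b3 = 0 := by
  rcases eq_or_lt_of_le ht0 with h0 | h0
  · -- t = 0
    have ht' : (t : ℂ) = 0 := by rw [← h0]; norm_num
    rw [ht', zero_mul, add_zero] at e1 e3
    have hp := H 1 (by norm_num)
    have hm := H (-1) (by norm_num)
    have k1 : a1 + 1 * b1 = 1 + b1 := by linear_combination e1
    have k2 : a1 + (-1) * b1 = 1 - b1 := by linear_combination e1
    have k3 : a3 + 1 * b3 = b3 := by linear_combination e3
    have k4 : a3 + (-1) * b3 = -b3 := by linear_combination e3
    rw [k1, k3] at hp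
    rw [k2, k4, norm_neg] at hm
    have tri : (2 : ℝ) ≤ ‖1 + b1‖ + ‖1 - b1‖ := by
      have h2 : ((1 : ℂ) + b1) + (1 - b1) = 2 := by ring
      have t1 := norm_add_le ((1 : ℂ) + b1) (1 - b1)
      rw [h2, Complex.norm_two] at t1
      exact t1
    have hb3 : ‖b3‖ ≤ 0 := by linarith
    have hb3' : b3 = 0 :=
      norm_eq_zero.mp (le_antisymm hb3 (norm_nonneg b3))
    exact ⟨e3, hb3'⟩
  · -- t > 0
    suffices hb3 : b3 = 0 by
      refine ⟨?_, hb3⟩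
      rw [hb3, mul_zero, add_zero] at e3; exact e3
    by_contra hne
    set B := ‖b3‖ with hBdef
    have hBpos : 0 < B := norm_pos_iff.mpr hne
    have hB1 : B ≤ 1 := by
      have hp0 := H 1 (by norm_num)
      have hm0 := H (-1) (by norm_num)
      have n1 := norm_nonneg (a1 + 1 * b1)
      have n2 := norm_nonneg (a1 + (-1) * b1)
      have h2 : (a3 + 1 * b3) + -(a3 + (-1) * b3) = 2 * b3 := by ring
      have t1 := norm_add_le (a3 + 1 * b3) (-(a3 + (-1) * b3))
      rw [h2, norm_neg, norm_mul, Complex.norm_two] at t1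
      linarith
    set δ := B ^ 2 / 2 with hδdef
    have hδpos : 0 < δ := by positivity
    have hδ2 : δ ≤ 2 := by nlinarith
    obtain ⟨v, v', hnv, hnv', hw0, hw0', hvv'⟩ := stmt11_circle δ hδpos hδ2
    have hsq : Real.sqrt (2 * δ) = B := by
      rw [hδdef, show 2 * (B ^ 2 / 2) = B ^ 2 by ring]
      exact Real.sqrt_sq hBpos.le
    have hw : ‖v - 1‖ = B := by rw [hw0, hsq]
    have hw' : ‖v' - 1‖ = B := by rw [hw0', hsq]
    have hzv : ‖(t : ℂ) * v‖ ≤ 1 := by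
      rw [norm_mul, Complex.norm_of_nonneg ht0, hnv, mul_one]; exact ht1
    have hzv' : ‖(t : ℂ) * v'‖ ≤ 1 := by
      rw [norm_mul, Complex.norm_of_nonneg ht0, hnv', mul_one]; exact ht1
    have hp := H ((t : ℂ) * v) hzv
    have hm := H ((t : ℂ) * v') hzv'
    have ea : a1 + ((t : ℂ) * v) * b1 = 1 + ((t : ℂ) * (v - 1)) * b1 := by
      linear_combination e1
    have ea' : a1 + ((t : ℂ) * v') * b1 = 1 + ((t : ℂ) * (v' - 1)) * b1 := by
      linear_combination e1
    have eb : a3 + ((t : ℂ) * v) * b3 = ((t : ℂ) * (v - 1)) * b3 := by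
      linear_combination e3
    have eb' : a3 + ((t : ℂ) * v') * b3 = ((t : ℂ) * (v' - 1)) * b3 := by
      linear_combination e3
    rw [ea, eb] at hp
    rw [ea', eb'] at hm
    have habsb : ‖((t : ℂ) * (v - 1)) * b3‖ = t * B * B := by
      rw [norm_mul, norm_mul, Complex.norm_of_nonneg ht0, hw]
    have habsb' : ‖((t : ℂ) * (v' - 1)) * b3‖ = t * B * B := by
      rw [norm_mul, norm_mul, Complex.norm_of_nonneg ht0, hw']
    rw [habsb] at hp
    rw [habsb'] at hm
    set X : ℂ := 1 + ((t : ℂ) * (v - 1)) * b1 with hXdef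
    set X' : ℂ := 1 + ((t : ℂ) * (v' - 1)) * b1 with hX'def
    set c : ℂ := ((-2 * (δ * t) : ℝ) : ℂ) * b1 with hcdef
    have hXX' : X + X' = 2 + c := by
      rw [hXdef, hX'def, hcdef]
      push_cast
      linear_combination ((t : ℂ) * b1) * hvv'
    have hc : ‖c‖ ≤ 2 * (δ * t) := by
      rw [hcdef, norm_mul, Complex.norm_real, Real.norm_eq_abs]
      rw [show |(-2 * (δ * t) : ℝ)| = 2 * (δ * t) by
        rw [abs_of_nonpos (by nlinarith)]; ring]
      calc 2 * (δ * t) * ‖b1‖ ≤ 2 * (δ * t) * 1 :=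
            mul_le_mul_of_nonneg_left hb (by positivity)
        _ = 2 * (δ * t) := by ring
    have h2c : (X + X') + -c = 2 := by rw [hXX']; ring
    have key : (2 : ℝ) ≤ ‖X + X'‖ + ‖c‖ := by
      have t1 := norm_add_le (X + X') (-c)
      rw [h2c, norm_neg, Complex.norm_two] at t1
      exact t1
    have tri := norm_add_le X X'
    have hδt : 2 * (δ * t) = t * B * B := by rw [hδdef]; ring
    have hfin : t * B * B ≤ 0 := by linarith
    nlinarith [mul_pos (mul_pos h0 hBpos) hBpos]

theorem stmt11
    (K : Set (ℂ × ℂ × ℂ))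
    (hK : K = {z : ℂ × ℂ × ℂ |
      max (‖z.1‖ + ‖z.2.2‖)
        (‖z.2.1‖ + ‖z.2.2‖) ≤ 1})
    (R : (ℂ × ℂ × ℂ) →ₗ[ℂ] (ℂ × ℂ × ℂ))
    (hmaps : Set.MapsTo R K K)
    (t : ℝ) (ht : t ∈ Set.Icc (0 : ℝ) 1)
    (hfix : R (1, (t : ℂ), 0) = (1, (t : ℂ), 0)) :
    (R (1, 0, 0)).2.2 = 0 ∧ (R (0, 1, 0)).2.2 = 0 := by
  obtain ⟨ht0, ht1⟩ := ht
  set α := R (1, 0, 0) with hα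
  set β := R (0, 1, 0) with hβ
  have hsplit : ∀ z : ℂ, ((1 : ℂ), z, (0 : ℂ)) = ((1 : ℂ), (0 : ℂ), (0 : ℂ)) + z • ((0 : ℂ), (1 : ℂ), (0 : ℂ)) := by
    intro z
    simp [Prod.ext_iff]
  have hexp : ∀ z : ℂ, R (1, z, 0) = α + z • β := by
    intro z
    rw [hsplit z, map_add, map_smul]
  have heq : α + (t : ℂ) • β = ((1 : ℂ), (t : ℂ), (0 : ℂ)) := by
    rw [← hexp]; exact hfix
  have e1 : α.1 + (t : ℂ) * β.1 = 1 := by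
    have := congrArg Prod.fst heq
    simpa [smul_eq_mul] using this
  have e3 : α.2.2 + (t : ℂ) * β.2.2 = 0 := by
    have := congrArg (fun p : ℂ × ℂ × ℂ => p.2.2) heq
    simpa [smul_eq_mul] using this
  have hβK : β ∈ K := by
    apply hmaps
    rw [hK]
    simp
  have hb : ‖β.1‖ ≤ 1 := by
    rw [hK] at hβK
    simp only [Set.mem_setOf_eq] at hβK
    have h1 := (max_le_iff.mp hβK).1
    have := norm_nonneg β.2.2
    linarith
  have H : ∀ z : ℂ, ‖z‖ ≤ 1 →
      ‖α.1 + z * β.1‖ + ‖α.2.2 + z * β.2.2‖ ≤ 1 := by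
    intro z hz
    have hmem : ((1 : ℂ), z, (0 : ℂ)) ∈ K := by
      rw [hK]
      simp [hz]
    have himg := hmaps hmem
    rw [hK, hexp z] at himg
    simp only [Set.mem_setOf_eq] at himg
    have h1 := (max_le_iff.mp himg).1
    simpa [smul_eq_mul] using h1
  exact stmt11_aux t ht0 ht1 α.1 β.1 α.2.2 β.2.2 e1 e3 hb H
end

section
/- Let K = {z ∈ ℂ³ : max(|z₁|+|z₃|, |z₂|+|z₃|) ≤ 1} and let R : ℂ³ → ℂ³ be a ℂ-linear map with R(K) ⊆ K, R ∘ R = R, whose image V = R(ℂ³) is two-dimensional and not equal to ℂ² × {0}, with R(ℂ²×{0}) ⊆ ℂ²×{0} and V ∩ ({0}×ℂ²) containing a vector (0,γ₂,γ₃) with γ₃ ≠ 0. Then R(0,0,1) = (0,0,1). -/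
theorem stmt12
    (K : Set (ℂ × ℂ × ℂ))
    (hK : K = {z : ℂ × ℂ × ℂ |
      max (‖z.1‖ + ‖z.2.2‖)
        (‖z.2.1‖ + ‖z.2.2‖) ≤ 1})
    (R : (ℂ × ℂ × ℂ) →ₗ[ℂ] (ℂ × ℂ × ℂ))
    (hmaps : Set.MapsTo R K K)
    (hidem : ∀ z, R (R z) = R z)
    (hdim : Module.finrank ℂ (LinearMap.range R) = 2)
    (hne : (LinearMap.range R : Set (ℂ × ℂ × ℂ)) ≠ {z : ℂ × ℂ × ℂ | z.2.2 = 0})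
    (hC2 : Set.MapsTo R {z : ℂ × ℂ × ℂ | z.2.2 = 0} {z : ℂ × ℂ × ℂ | z.2.2 = 0})
    (γ₂ γ₃ : ℂ) (hγ₃ : γ₃ ≠ 0)
    (hmem : ((0 : ℂ), γ₂, γ₃) ∈ LinearMap.range R) :
    R (0, 0, 1) = (0, 0, 1) := by
  obtain ⟨w, hw⟩ := hmem
  have hv : R (0, γ₂, γ₃) = (0, γ₂, γ₃) := by rw [← hw, hidem]
  have h2 : (R (0, 1, 0)).2.2 = 0 := hC2 (by simp)
  have hlin : R (0, γ₂, γ₃) = γ₂ • R (0, 1, 0) + γ₃ • R (0, 0, 1) := by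
    rw [← map_smul, ← map_smul, ← map_add]
    congr 1
    simp [Prod.ext_iff]
  have hc : (R (0, 0, 1)).2.2 = 1 := by
    have h3 := congrArg (fun z : ℂ × ℂ × ℂ => z.2.2) (hlin.symm.trans hv)
    simp only [Prod.snd_add, Prod.smul_snd, Prod.snd_add, smul_eq_mul, h2,
      mul_zero, zero_add, Prod.smul_snd] at h3
    have : γ₃ * (R (0, 0, 1)).2.2 = γ₃ * 1 := by rw [mul_one]; exact h3
    exact mul_left_cancel₀ hγ₃ this
  have hKmem : R (0, 0, 1) ∈ K := by
    apply hmaps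
    simp [hK]
  rw [hK] at hKmem
  simp only [Set.mem_setOf_eq, hc, map_one, norm_one, max_le_iff] at hKmem
  have ha : ‖(R (0, 0, 1)).1‖ = 0 := by
    have := hKmem.1
    have h0 : (0:ℝ) ≤ ‖(R (0, 0, 1)).1‖ := norm_nonneg _
    linarith
  have hb : ‖(R (0, 0, 1)).2.1‖ = 0 := by
    have := hKmem.2
    have h0 : (0:ℝ) ≤ ‖(R (0, 0, 1)).2.1‖ := norm_nonneg _
    linarith
  rw [norm_eq_zero] at ha hb
  exact Prod.ext ha (Prod.ext hb hc)
end

section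
/- The map R(z₁,z₂,z₃) = ((z₁+z₂)/2, (z₁+z₂)/2, z₃) maps the tetrablock 𝔼 into itself, satisfies R ∘ R = R, and its image equals {(s/2, s/2, p) : (s,p) ∈ 𝔾₂}, where 𝔾₂ is the symmetrized bidisc. -/
/-- `2 × 2` symmetric complex matrices with largest singular value `< 1`. -/
def RIII2 : Set (Matrix (Fin 2) (Fin 2) ℂ) :=
  {A | A.IsSymm ∧ ∀ x : Fin 2 → ℂ, (∑ i, ‖x i‖ ^ 2) = 1 →
    ∑ i, ‖A.mulVec x i‖ ^ 2 < 1}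

def Lam (A : Matrix (Fin 2) (Fin 2) ℂ) : ℂ × ℂ × ℂ :=
  (A 0 0, A 1 1, A 0 0 * A 1 1 - (A 0 1) ^ 2)

/-- The tetrablock. -/
def tetrablock : Set (ℂ × ℂ × ℂ) := Lam '' RIII2

/-- The symmetrized bidisc. -/
def symBidisc : Set (ℂ × ℂ) :=
  {w | ∃ lam mu : ℂ, ‖lam‖ < 1 ∧ ‖mu‖ < 1 ∧
    w = (lam + mu, lam * mu)}

/-- An eigenvalue of a matrix in `RIII2` has modulus `< 1`. -/
lemma eig_abs_lt (A : Matrix (Fin 2) (Fin 2) ℂ) (hA : A ∈ RIII2) (t : ℂ)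
    (x : Fin 2 → ℂ) (hx : x ≠ 0) (heig : A.mulVec x = t • x) :
    ‖t‖ < 1 := by
  set S : ℝ := ‖x 0‖ ^ 2 + ‖x 1‖ ^ 2 with hS
  have hS0 : 0 < S := by
    have hx' : x 0 ≠ 0 ∨ x 1 ≠ 0 := by
      by_contra h
      push_neg at h
      exact hx (funext fun j => by fin_cases j <;> simp [h.1, h.2])
    have h0 : 0 ≤ ‖x 0‖ ^ 2 := by positivity
    have h1 : 0 ≤ ‖x 1‖ ^ 2 := by positivity
    rcases hx' with h | h <;>
      [have := pow_pos (norm_pos_iff.mpr h) 2; have := pow_pos (norm_pos_iff.mpr h) 2] <;>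
      simp only [hS] <;> nlinarith
  set r : ℝ := Real.sqrt S with hr
  have hr0 : 0 < r := Real.sqrt_pos.2 hS0
  set y : Fin 2 → ℂ := fun i => (r : ℂ)⁻¹ * x i with hy
  have habs : ∀ i, ‖y i‖ ^ 2 = ‖x i‖ ^ 2 / S := by
    intro i
    simp only [hy, norm_mul, norm_inv, Complex.norm_real, Real.norm_eq_abs, abs_of_pos hr0, hr]
    simp only [abs_of_pos (Real.sqrt_pos.2 hS0), mul_pow, inv_pow, Real.sq_sqrt hS0.le]
    ring
  have hy1 : (∑ i, ‖y i‖ ^ 2) = 1 := by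
    rw [Fin.sum_univ_two, habs 0, habs 1]
    field_simp
    exact hS.symm
  have hAy : A.mulVec y = fun i => t * y i := by
    have : y = (r : ℂ)⁻¹ • x := rfl
    rw [this, Matrix.mulVec_smul, heig]
    funext i
    simp [Pi.smul_apply, smul_eq_mul]
    ring
  have := hA.2 y hy1
  rw [hAy] at this
  have h2 : (∑ i, ‖t * y i‖ ^ 2) = ‖t‖ ^ 2 := by
    rw [Fin.sum_univ_two] at hy1 ⊢
    simp only [norm_mul, mul_pow]
    rw [← mul_add, hy1, mul_one]
  rw [h2] at this
  nlinarith [norm_nonneg t]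

lemma mulVec_two (A : Matrix (Fin 2) (Fin 2) ℂ) (x : Fin 2 → ℂ) (t : ℂ)
    (h0 : A 0 0 * x 0 + A 0 1 * x 1 = t * x 0)
    (h1 : A 1 0 * x 0 + A 1 1 * x 1 = t * x 1) :
    A.mulVec x = t • x := by
  funext i
  fin_cases i <;>
    simp [Matrix.mulVec, dotProduct, Fin.sum_univ_two, h0, h1]

/-- A root of the characteristic polynomial of a matrix in `RIII2` has modulus `< 1`. -/
lemma root_lt (A : Matrix (Fin 2) (Fin 2) ℂ) (hA : A ∈ RIII2) (t : ℂ)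
    (ht : (t - A 0 0) * (t - A 1 1) = (A 0 1) ^ 2) :
    ‖t‖ < 1 := by
  have hsym : A 1 0 = A 0 1 := by
    have h := hA.1
    unfold Matrix.IsSymm at h
    calc A 1 0 = A.transpose 0 1 := rfl
    _ = A 0 1 := by rw [h]
  by_cases hc : A 0 1 = 0
  · rw [hc] at ht
    simp only [ne_eq, pow_two, mul_zero, zero_mul] at ht
    rw [mul_eq_zero, sub_eq_zero, sub_eq_zero] at ht
    rcases ht with h | h
    · exact eig_abs_lt A hA t ![1, 0]
        (fun hz => one_ne_zero (α := ℂ) (by simpa using congrFun hz 0))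
        (mulVec_two A _ t (by simp [h]) (by simp [hsym, hc]))
    · exact eig_abs_lt A hA t ![0, 1]
        (fun hz => one_ne_zero (α := ℂ) (by simpa using congrFun hz 1))
        (mulVec_two A _ t (by simp [hc]) (by simp [h]))
  · refine eig_abs_lt A hA t ![A 0 1, t - A 0 0]
      (fun hz => hc (by simpa using congrFun hz 0))
      (mulVec_two A _ t (by simp; ring) ?_)
    simp only [Matrix.cons_val_zero, Matrix.cons_val_one, Matrix.head_cons]
    rw [hsym]
    linear_combination -ht

lemma key1 (A : Matrix (Fin 2) (Fin 2) ℂ) (hA : A ∈ RIII2) :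
    (A 0 0 + A 1 1, A 0 0 * A 1 1 - (A 0 1) ^ 2) ∈ symBidisc := by
  obtain ⟨d, hd⟩ := IsAlgClosed.exists_pow_nat_eq
    ((A 0 0 + A 1 1) ^ 2 - 4 * (A 0 0 * A 1 1 - (A 0 1) ^ 2)) (n := 2) (by norm_num)
  refine ⟨(A 0 0 + A 1 1 + d) / 2, (A 0 0 + A 1 1 - d) / 2, ?_, ?_, ?_⟩
  · exact root_lt A hA _ (by linear_combination hd / 4)
  · exact root_lt A hA _ (by linear_combination hd / 4)
  · exact Prod.ext (by ring) (by linear_combination hd / 4)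

lemma key2 (l m : ℂ) (hl : ‖l‖ < 1) (hm : ‖m‖ < 1) :
    ∃ A ∈ RIII2, Lam A = ((l + m) / 2, (l + m) / 2, l * m) := by
  refine ⟨!![(l + m) / 2, (l - m) / 2; (l - m) / 2, (l + m) / 2], ⟨?_, ?_⟩, ?_⟩
  · unfold Matrix.IsSymm
    funext i j
    fin_cases i <;> fin_cases j <;> simp [Matrix.transpose]
  · intro x hx
    rw [Fin.sum_univ_two] at hx ⊢
    have h0 : (!![(l + m) / 2, (l - m) / 2; (l - m) / 2, (l + m) / 2]).mulVec x 0
        = (l * (x 0 + x 1) + m * (x 0 - x 1)) / 2 := by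
      simp [Matrix.mulVec, dotProduct, Fin.sum_univ_two]
      ring
    have h1 : (!![(l + m) / 2, (l - m) / 2; (l - m) / 2, (l + m) / 2]).mulVec x 1
        = (l * (x 0 + x 1) - m * (x 0 - x 1)) / 2 := by
      simp [Matrix.mulVec, dotProduct, Fin.sum_univ_two]
      ring
    rw [h0, h1]
    simp only [Complex.sq_norm] at hx ⊢
    have par : Complex.normSq ((l * (x 0 + x 1) + m * (x 0 - x 1)) / 2)
        + Complex.normSq ((l * (x 0 + x 1) - m * (x 0 - x 1)) / 2)
        = (Complex.normSq (l * (x 0 + x 1)) + Complex.normSq (m * (x 0 - x 1))) / 2 := by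
      simp only [Complex.normSq_apply, Complex.div_re, Complex.div_im, Complex.add_re,
        Complex.add_im, Complex.sub_re, Complex.sub_im, Complex.mul_re, Complex.mul_im]
      norm_num
      ring
    rw [par, Complex.normSq_mul, Complex.normSq_mul]
    have par2 : Complex.normSq (x 0 + x 1) + Complex.normSq (x 0 - x 1)
        = 2 * (Complex.normSq (x 0) + Complex.normSq (x 1)) := by
      simp only [Complex.normSq_apply, Complex.add_re, Complex.add_im, Complex.sub_re,
        Complex.sub_im]
      ring
    have hl2 : Complex.normSq l < 1 := by
      rw [← Complex.sq_norm]; nlinarith [norm_nonneg l]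
    have hm2 : Complex.normSq m < 1 := by
      rw [← Complex.sq_norm]; nlinarith [norm_nonneg m]
    have hsum : Complex.normSq (x 0 + x 1) + Complex.normSq (x 0 - x 1) = 2 := by
      rw [par2, hx]; ring
    have hN1 := Complex.normSq_nonneg (x 0 + x 1)
    have hN2 := Complex.normSq_nonneg (x 0 - x 1)
    rcases lt_or_ge 0 (Complex.normSq (x 0 + x 1)) with h | h
    · nlinarith
    · have h1' : Complex.normSq (x 0 + x 1) = 0 := le_antisymm h hN1
      nlinarith
  · simp only [Lam, Matrix.cons_val', Matrix.cons_val_zero, Matrix.empty_val',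
      Matrix.cons_val_fin_one, Matrix.cons_val_one, Matrix.head_cons, Matrix.head_fin_const]
    refine Prod.ext rfl (Prod.ext rfl ?_)
    show (l + m) / 2 * ((l + m) / 2) - ((l - m) / 2) ^ 2 = l * m
    ring

theorem stmt15 :
    let R : ℂ × ℂ × ℂ → ℂ × ℂ × ℂ :=
      fun z => ((z.1 + z.2.1) / 2, (z.1 + z.2.1) / 2, z.2.2)
    Set.MapsTo R tetrablock tetrablock ∧ R ∘ R = R ∧
      R '' tetrablock =
        {w : ℂ × ℂ × ℂ | ∃ s p : ℂ, (s, p) ∈ symBidisc ∧ w = (s / 2, s / 2, p)} := by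
  intro R
  refine ⟨?_, ?_, ?_⟩
  · rintro z ⟨A, hA, rfl⟩
    obtain ⟨l, m, hl, hm, hlm⟩ := key1 A hA
    obtain ⟨B, hB, hLamB⟩ := key2 l m hl hm
    refine ⟨B, hB, ?_⟩
    rw [hLamB]
    have h1 : A 0 0 + A 1 1 = l + m := congrArg Prod.fst hlm
    have h2 : A 0 0 * A 1 1 - (A 0 1) ^ 2 = l * m := congrArg Prod.snd hlm
    show ((l + m) / 2, (l + m) / 2, l * m)
        = ((A 0 0 + A 1 1) / 2, (A 0 0 + A 1 1) / 2, A 0 0 * A 1 1 - (A 0 1) ^ 2)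
    rw [h1, h2]
  · funext z
    exact Prod.ext (by show (_ : ℂ) = _; simp [R]) (Prod.ext (by show (_ : ℂ) = _; simp [R]) rfl)
  · ext w
    constructor
    · rintro ⟨z, ⟨A, hA, rfl⟩, rfl⟩
      exact ⟨A 0 0 + A 1 1, A 0 0 * A 1 1 - (A 0 1) ^ 2, key1 A hA, rfl⟩
    · rintro ⟨s, p, ⟨l, m, hl, hm, hsp⟩, rfl⟩
      obtain ⟨B, hB, hLamB⟩ := key2 l m hl hm
      refine ⟨Lam B, ⟨B, hB, rfl⟩, ?_⟩
      rw [hLamB]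
      have h1 : s = l + m := congrArg Prod.fst hsp
      have h2 : p = l * m := congrArg Prod.snd hsp
      show (((l + m) / 2 + (l + m) / 2) / 2, ((l + m) / 2 + (l + m) / 2) / 2, l * m)
        = (s / 2, s / 2, p)
      rw [h1, h2]
      refine Prod.ext (by ring) (Prod.ext (by ring) rfl)
end
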